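/- Let k ∈ ℕ and write k = r(q-1) + s with r ∈ ℕ and 0 ≤ s < q-1. The affine Reed–Muller code RM(k,2,q) ⊆ F_q^{q^2} has minimum distance q(q-s) if r = 0, minimum distance q-s if r = 1, and minimum distance 1 if r ≥ 2. -/

import Mathlib

noncomputable def dualCode (F : Type*) [Field F] {ι : Type*} [Fintype ι]
    (C : Submodule F (ι → F)) : Submodule F (ι → F) where
  carrier := {x | ∀ c ∈ C, ∑ i, x i * c i = 0}
  zero_mem' := by intro c _; simp
  add_mem' := by
    intro x y hx hy c hc
    simp only [Pi.add_apply, add_mul, Finset.sum_add_distrib]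
    rw [hx c hc, hy c hc, add_zero]
  smul_mem' := by
    intro a x hx c hc
    simp only [Pi.smul_apply, smul_eq_mul, mul_assoc, ← Finset.mul_sum]
    rw [hx c hc, mul_zero]

noncomputable def minDist (F : Type*) [Field F] {ι : Type*} [Fintype ι] [DecidableEq F]
    (C : Submodule F (ι → F)) : ℕ :=
  sInf {w | ∃ c ∈ C, c ≠ 0 ∧ hammingNorm c = w}

/-- The weight of a matrix codeword: the number of nonzero entries. -/
noncomputable def wt2 {F : Type*} [Zero F] [DecidableEq F] {ι₁ ι₂ : Type*} [Fintype ι₁]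
    [Fintype ι₂] (m : ι₂ → ι₁ → F) : ℕ :=
  hammingNorm (fun p : ι₂ × ι₁ => m p.1 p.2)

noncomputable def minDist2 (F : Type*) [Field F] [DecidableEq F] {ι₁ ι₂ : Type*} [Fintype ι₁]
    [Fintype ι₂] (C : Submodule F (ι₂ → ι₁ → F)) : ℕ :=
  sInf {w | ∃ m ∈ C, m ≠ 0 ∧ wt2 m = w}

noncomputable def dualCode2 (F : Type*) [Field F] {ι₁ ι₂ : Type*} [Fintype ι₁] [Fintype ι₂]
    (C : Submodule F (ι₂ → ι₁ → F)) : Submodule F (ι₂ → ι₁ → F) where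
  carrier := {x | ∀ c ∈ C, ∑ i, ∑ j, x i j * c i j = 0}
  zero_mem' := by intro c _; simp
  add_mem' := by
    intro x y hx hy c hc
    simp only [Pi.add_apply, add_mul, Finset.sum_add_distrib]
    rw [hx c hc, hy c hc, add_zero]
  smul_mem' := by
    intro a x hx c hc
    simp only [Pi.smul_apply, smul_eq_mul, mul_assoc, ← Finset.mul_sum]
    rw [hx c hc, mul_zero]

/-- The affine Reed–Muller code `RM(k,2,q)`: evaluations of polynomials in two variables of
total degree at most `k` at all points of `F × F`. -/
noncomputable def RM (F : Type*) [Field F] (k : ℕ) : Submodule F (F → F → F) :=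
  (MvPolynomial.restrictTotalDegree (Fin 2) F k).map
    (LinearMap.pi fun x : F => LinearMap.pi fun t : F =>
      (MvPolynomial.aeval ![x, t]).toLinearMap)

section RMAux

open Polynomial Finset

variable {F : Type*} [Field F] [Fintype F] [DecidableEq F]

/-- exponent reduction modulo `x^q = x` -/
def redE (q a : ℕ) : ℕ := if a = 0 then 0 else (a - 1) % (q - 1) + 1

lemma redE_le_self (q a : ℕ) : redE q a ≤ a := by
  unfold redE; split
  · omega
  · have := Nat.mod_le (a - 1) (q - 1); omega

lemma redE_le (q a : ℕ) (hq : 2 ≤ q) : redE q a ≤ q - 1 := by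
  unfold redE; split
  · omega
  · have : (a - 1) % (q - 1) < q - 1 := Nat.mod_lt _ (by omega)
    omega

set_option linter.unusedSectionVars false in
lemma pow_redE (q : ℕ) (hq : Fintype.card F = q) (a : ℕ) (x : F) :
    x ^ a = x ^ (redE q a) := by
  rcases eq_or_ne a 0 with rfl | ha
  · simp [redE]
  rcases eq_or_ne x 0 with rfl | hx
  · have h1 : redE q a ≠ 0 := by unfold redE; simp [ha]
    rw [zero_pow ha, zero_pow h1]
  · have hc : x ^ (q - 1) = 1 := by
      subst hq; exact FiniteField.pow_card_sub_one_eq_one x hx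
    have hq2 : 2 ≤ q := hq ▸ Fintype.one_lt_card
    have key : a = redE q a + (q - 1) * ((a - 1) / (q - 1)) := by
      unfold redE; simp only [ha, if_false]
      have := Nat.mod_add_div (a - 1) (q - 1)
      omega
    conv_lhs => rw [key]
    rw [pow_add, pow_mul, hc, one_pow, mul_one]

/-- evaluation of an iterated polynomial: outer variable at `x`, coefficients at `t` -/
noncomputable def evP (P : Polynomial (Polynomial F)) (x t : F) : F :=
  Polynomial.eval₂ (Polynomial.evalRingHom t) x P

set_option linter.unusedSectionVars false in
lemma count_nonzero (q : ℕ) (hq : Fintype.card F = q) (p : Polynomial F) (hp : p ≠ 0) :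
    q - p.natDegree ≤ (Finset.univ.filter fun x => p.eval x ≠ 0).card := by
  have hroots : (Finset.univ.filter fun x => p.eval x = 0).card ≤ p.natDegree := by
    have hsub : (Finset.univ.filter fun x => p.eval x = 0) ⊆ p.roots.toFinset := by
      intro x hx
      simp only [Finset.mem_filter] at hx
      simp [Multiset.mem_toFinset, Polynomial.mem_roots, hp, Polynomial.IsRoot, hx.2]
    calc (Finset.univ.filter fun x => p.eval x = 0).card ≤ p.roots.toFinset.card :=
          Finset.card_le_card hsub
      _ ≤ Multiset.card p.roots := p.roots.toFinset_card_le
      _ ≤ p.natDegree := p.card_roots'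
  have h2 := Finset.card_filter_add_card_filter_not (s := (Finset.univ : Finset F))
    (p := fun x => p.eval x = 0)
  simp only [Finset.card_univ, hq, not_not] at h2
  have h3 : (Finset.univ.filter fun x => ¬ p.eval x = 0).card
      = (Finset.univ.filter fun x => p.eval x ≠ 0).card := rfl
  omega

set_option linter.unusedSectionVars false in
lemma exists_rep (q k : ℕ) (hq : Fintype.card F = q) (f : F → F → F) (hf : f ∈ RM F k) :
    ∃ P : Polynomial (Polynomial F),
      (∀ i j, (P.coeff i).coeff j ≠ 0 → i ≤ q - 1 ∧ j ≤ q - 1 ∧ i + j ≤ k) ∧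
      ∀ x t, f x t = evP P x t := by
  have hq2 : 2 ≤ q := hq ▸ Fintype.one_lt_card
  obtain ⟨P0, hP0, rfl⟩ := hf
  rw [SetLike.mem_coe, MvPolynomial.mem_restrictTotalDegree] at hP0
  have hdeg : ∀ m ∈ P0.support, m 0 + m 1 ≤ k := by
    intro m hm
    have h1 : (m.sum fun _ e => e) ≤ P0.totalDegree := MvPolynomial.le_totalDegree hm
    have h2 : (m.sum fun _ e => e) = m 0 + m 1 := by
      rw [Finsupp.sum_fintype _ _ (fun _ => rfl), Fin.sum_univ_two]
    omega
  refine ⟨∑ m ∈ P0.support,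
      Polynomial.monomial (redE q (m 0)) (Polynomial.monomial (redE q (m 1)) (P0.coeff m)),
      ?_, ?_⟩
  · intro i j hij
    have hij' : (∑ m ∈ P0.support,
        ((Polynomial.monomial (redE q (m 0))
          (Polynomial.monomial (redE q (m 1)) (P0.coeff m))).coeff i).coeff j) ≠ 0 := by
      rwa [← Polynomial.finset_sum_coeff, ← Polynomial.finset_sum_coeff]
    obtain ⟨m, hm, hne⟩ := Finset.exists_ne_zero_of_sum_ne_zero hij'
    rw [Polynomial.coeff_monomial] at hne
    split_ifs at hne with h1
    · rw [Polynomial.coeff_monomial] at hne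
      split_ifs at hne with h2
      · subst h1; subst h2
        refine ⟨redE_le q _ hq2, redE_le q _ hq2, ?_⟩
        have := hdeg m hm
        have := redE_le_self q (m 0)
        have := redE_le_self q (m 1)
        omega
      · simp at hne
    · simp at hne
  · intro x t
    have hL : (LinearMap.pi fun x : F => LinearMap.pi fun t : F =>
        (MvPolynomial.aeval ![x, t]).toLinearMap) P0 x t = MvPolynomial.aeval ![x, t] P0 := rfl
    rw [hL]
    have haev : MvPolynomial.aeval ![x, t] P0 = MvPolynomial.eval ![x, t] P0 := rfl
    rw [haev, MvPolynomial.eval_eq']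
    rw [evP, Polynomial.eval₂_finset_sum]
    refine Finset.sum_congr rfl fun m hm => ?_
    rw [Polynomial.eval₂_monomial]
    simp only [Polynomial.coe_evalRingHom, Polynomial.eval_monomial]
    rw [Fin.prod_univ_two]
    simp only [Matrix.cons_val_zero, Matrix.cons_val_one, Matrix.head_cons]
    rw [← pow_redE q hq (m 0) x, ← pow_redE q hq (m 1) t]
    ring

lemma wt2_eq_sum (f : F → F → F) :
    wt2 f = ∑ t : F, (Finset.univ.filter fun x => f x t ≠ 0).card := by
  unfold wt2 hammingNorm
  rw [Finset.card_filter, Fintype.sum_prod_type, Finset.sum_comm]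
  refine Finset.sum_congr rfl fun t _ => ?_
  rw [Finset.card_filter]

set_option linter.unusedSectionVars false in
lemma wt_lower (q k : ℕ) (hq : Fintype.card F = q) (f : F → F → F) (hfRM : f ∈ RM F k)
    (hf0 : f ≠ 0) :
    ∃ a b, a ≤ q - 1 ∧ b ≤ q - 1 ∧ a + b ≤ k ∧ (q - a) * (q - b) ≤ wt2 f := by
  obtain ⟨P, hsupp, heval⟩ := exists_rep q k hq f hfRM
  have hP : P ≠ 0 := by
    rintro rfl
    apply hf0
    funext x t
    rw [heval x t]; simp [evP]
  set d := P.natDegree with hd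
  have hg : P.coeff d ≠ 0 := by
    rw [hd]; exact Polynomial.leadingCoeff_ne_zero.mpr hP
  set g := P.coeff d with hgdef
  set b := g.natDegree with hb
  have hgb : g.coeff b ≠ 0 := by
    rw [hb]; exact Polynomial.leadingCoeff_ne_zero.mpr hg
  obtain ⟨hd1, hb1, hdb⟩ := hsupp d b hgb
  refine ⟨d, b, hd1, hb1, hdb, ?_⟩
  have hG : q - b ≤ (Finset.univ.filter fun t => g.eval t ≠ 0).card :=
    count_nonzero q hq g hg
  have hrow : ∀ t : F, g.eval t ≠ 0 →
      q - d ≤ (Finset.univ.filter fun x => f x t ≠ 0).card := by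
    intro t ht
    set pt := P.map (Polynomial.evalRingHom t) with hptdef
    have hcoeff : pt.coeff d = g.eval t := by
      rw [hptdef, Polynomial.coeff_map]; rfl
    have hpt : pt ≠ 0 := fun h => ht (by rw [← hcoeff, h, Polynomial.coeff_zero])
    have hnd : pt.natDegree = d :=
      le_antisymm Polynomial.natDegree_map_le
        (Polynomial.le_natDegree_of_ne_zero (hcoeff ▸ ht))
    have hfx : ∀ x, f x t = pt.eval x := by
      intro x; rw [heval x t, evP, hptdef, Polynomial.eval_map]
    calc q - d = q - pt.natDegree := by rw [hnd]
      _ ≤ (Finset.univ.filter fun x => pt.eval x ≠ 0).card := count_nonzero q hq pt hpt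
      _ = (Finset.univ.filter fun x => f x t ≠ 0).card := by
          congr 1; ext x; simp [hfx]
  rw [wt2_eq_sum]
  calc (q - d) * (q - b) = (q - b) * (q - d) := Nat.mul_comm _ _
    _ ≤ (Finset.univ.filter fun t => g.eval t ≠ 0).card * (q - d) :=
        Nat.mul_le_mul_right _ hG
    _ = ∑ _t ∈ (Finset.univ.filter fun t => g.eval t ≠ 0), (q - d) := by
        rw [Finset.sum_const, smul_eq_mul]
    _ ≤ ∑ t ∈ (Finset.univ.filter fun t => g.eval t ≠ 0),
          (Finset.univ.filter fun x => f x t ≠ 0).card :=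
        Finset.sum_le_sum fun t ht => hrow t (by simpa using (Finset.mem_filter.mp ht).2)
    _ ≤ ∑ t : F, (Finset.univ.filter fun x => f x t ≠ 0).card :=
        Finset.sum_le_sum_of_subset (Finset.filter_subset _ _)

set_option linter.unusedSectionVars false in
lemma wt_upper (q k : ℕ) (hq : Fintype.card F = q) (A B : Finset F)
    (hk : A.card + B.card ≤ k) (hAq : A.card < q) (hBq : B.card < q) :
    ∃ f ∈ RM F k, f ≠ 0 ∧ wt2 f = (q - A.card) * (q - B.card) := by
  classical
  set f : F → F → F := fun x t => (∏ a ∈ A, (x - a)) * ∏ b ∈ B, (t - b) with hfdef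
  have hfx : ∀ x t, f x t ≠ 0 ↔ x ∉ A ∧ t ∉ B := by
    intro x t
    rw [hfdef]
    simp only [mul_ne_zero_iff, Finset.prod_ne_zero_iff, sub_ne_zero]
    constructor
    · rintro ⟨h1, h2⟩
      exact ⟨fun hx => h1 x hx rfl, fun ht => h2 t ht rfl⟩
    · rintro ⟨h1, h2⟩
      exact ⟨fun a ha he => h1 (he ▸ ha), fun bb hb he => h2 (he ▸ hb)⟩
  have hfac : ∀ (i : Fin 2) (a : F),
      (MvPolynomial.X i - MvPolynomial.C a : MvPolynomial (Fin 2) F).totalDegree ≤ 1 := by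
    intro i a
    rw [sub_eq_add_neg, ← MvPolynomial.C_neg]
    refine le_trans (MvPolynomial.totalDegree_add _ _) ?_
    rw [MvPolynomial.totalDegree_X, MvPolynomial.totalDegree_C]
    simp
  have hmem : f ∈ RM F k := by
    refine ⟨(∏ a ∈ A, (MvPolynomial.X 0 - MvPolynomial.C a)) *
        ∏ bb ∈ B, (MvPolynomial.X 1 - MvPolynomial.C bb), ?_, ?_⟩
    · rw [SetLike.mem_coe, MvPolynomial.mem_restrictTotalDegree]
      refine le_trans (MvPolynomial.totalDegree_mul _ _) (le_trans (add_le_add ?_ ?_) hk)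
      · refine le_trans (MvPolynomial.totalDegree_finset_prod _ _) ?_
        calc ∑ a ∈ A, (MvPolynomial.X 0 - MvPolynomial.C a :
              MvPolynomial (Fin 2) F).totalDegree
            ≤ ∑ _a ∈ A, 1 := Finset.sum_le_sum fun a _ => hfac 0 a
          _ = A.card := by simp
      · refine le_trans (MvPolynomial.totalDegree_finset_prod _ _) ?_
        calc ∑ bb ∈ B, (MvPolynomial.X 1 - MvPolynomial.C bb :
              MvPolynomial (Fin 2) F).totalDegree
            ≤ ∑ _bb ∈ B, 1 := Finset.sum_le_sum fun bb _ => hfac 1 bb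
          _ = B.card := by simp
    · funext x t
      simp only [LinearMap.pi_apply, AlgHom.toLinearMap_apply, map_mul, map_prod, map_sub,
        MvPolynomial.aeval_X, MvPolynomial.aeval_C, Matrix.cons_val_zero, Matrix.cons_val_one,
        Matrix.head_cons, Algebra.algebraMap_self, RingHom.id_apply, hfdef]
  have hxA : ∃ x : F, x ∉ A := by
    by_contra h; push_neg at h
    have hsub : (Finset.univ : Finset F) ⊆ A := fun x _ => h x
    have := Finset.card_le_card hsub
    rw [Finset.card_univ, hq] at this; omega
  have hxB : ∃ t : F, t ∉ B := by
    by_contra h; push_neg at h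
    have hsub : (Finset.univ : Finset F) ⊆ B := fun x _ => h x
    have := Finset.card_le_card hsub
    rw [Finset.card_univ, hq] at this; omega
  obtain ⟨x0, hx0⟩ := hxA
  obtain ⟨t0, ht0⟩ := hxB
  have hf0 : f ≠ 0 := by
    intro h
    exact ((hfx x0 t0).mpr ⟨hx0, ht0⟩) (by rw [h]; rfl)
  refine ⟨f, hmem, hf0, ?_⟩
  unfold wt2 hammingNorm
  have hset : (Finset.univ.filter fun p : F × F => f p.1 p.2 ≠ 0) = Aᶜ ×ˢ Bᶜ := by
    ext p
    simp only [Finset.mem_filter, Finset.mem_univ, true_and, Finset.mem_product,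
      Finset.mem_compl, hfx]
  rw [show ({p : F × F | f p.1 p.2 ≠ 0} : Finset (F × F))
      = (Finset.univ.filter fun p : F × F => f p.1 p.2 ≠ 0) from rfl, hset,
    Finset.card_product, Finset.card_compl, Finset.card_compl, hq]

end RMAux

/-- minimum distance of the affine Reed–Muller code `RM(k,2,q)` where
`k = r(q-1) + s` with `0 ≤ s < q-1`: it is `q(q-s)` if `r = 0`, `q-s` if `r = 1`, and `1`
if `r ≥ 2`. -/
theorem RM_minDist (F : Type*) [Field F] [Fintype F] [DecidableEq F] (q k r s : ℕ)
    (hq : Fintype.card F = q) (hk : k = r * (q - 1) + s) (hs : s < q - 1) :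
    (r = 0 → minDist2 F (RM F k) = q * (q - s)) ∧
    (r = 1 → minDist2 F (RM F k) = q - s) ∧
    (2 ≤ r → minDist2 F (RM F k) = 1) := by
  have hq2 : 2 ≤ q := by
    have := Fintype.one_lt_card (α := F); omega
  refine ⟨?_, ?_, ?_⟩
  · rintro rfl
    have hk' : k = s := by omega
    subst hk'
    obtain ⟨A, -, hAcard⟩ := Finset.exists_subset_card_eq (s := (Finset.univ : Finset F)) (n := k)
      (by rw [Finset.card_univ, hq]; omega)
    obtain ⟨f, hfRM, hf0, hwt⟩ := wt_upper q k hq A ∅ (by simp [hAcard]) (by omega) (by simp only [Finset.card_empty]; omega)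
    have hmem : q * (q - k) ∈ {w | ∃ m ∈ RM F k, m ≠ 0 ∧ wt2 m = w} := by
      refine ⟨f, hfRM, hf0, ?_⟩
      rw [hwt, hAcard]; simp [Nat.mul_comm]
    refine le_antisymm (Nat.sInf_le hmem) (le_csInf ⟨_, hmem⟩ ?_)
    rintro w ⟨m, hmRM, hm0, rfl⟩
    obtain ⟨a, b, ha, hb, hab, hbound⟩ := wt_lower q k hq m hmRM hm0
    refine le_trans ?_ hbound
    have h1 : a ≤ q := by omega
    have h2 : b ≤ q := by omega
    have h3 : k ≤ q := by omega
    zify [h1, h2, h3]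
    have habz : (a : ℤ) + b ≤ k := by exact_mod_cast hab
    nlinarith [mul_nonneg (show (0:ℤ) ≤ a by positivity) (show (0:ℤ) ≤ b by positivity),
      mul_nonneg (show (0:ℤ) ≤ q by positivity) (show (0:ℤ) ≤ (k:ℤ) - a - b by linarith)]
  · rintro rfl
    have hk' : k = q - 1 + s := by omega
    obtain ⟨B, -, hBcard⟩ := Finset.exists_subset_card_eq (s := (Finset.univ : Finset F)) (n := s)
      (by rw [Finset.card_univ, hq]; omega)
    have hAcard : ({(0:F)}ᶜ : Finset F).card = q - 1 := by
      rw [Finset.card_compl, Finset.card_singleton, hq]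
    obtain ⟨f, hfRM, hf0, hwt⟩ := wt_upper q k hq ({(0:F)}ᶜ) B
      (by rw [hAcard, hBcard]; omega) (by omega) (by omega)
    have hmem : q - s ∈ {w | ∃ m ∈ RM F k, m ≠ 0 ∧ wt2 m = w} := by
      refine ⟨f, hfRM, hf0, ?_⟩
      rw [hwt, hAcard, hBcard]
      have : q - (q - 1) = 1 := by omega
      rw [this, one_mul]
    refine le_antisymm (Nat.sInf_le hmem) (le_csInf ⟨_, hmem⟩ ?_)
    rintro w ⟨m, hmRM, hm0, rfl⟩
    obtain ⟨a, b, ha, hb, hab, hbound⟩ := wt_lower q k hq m hmRM hm0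
    refine le_trans ?_ hbound
    have h1 : a ≤ q := by omega
    have h2 : b ≤ q := by omega
    have h3 : s ≤ q := by omega
    zify [h1, h2, h3]
    have habz : (a : ℤ) + b ≤ (q : ℤ) - 1 + s := by
      have : (a : ℤ) + b ≤ (k : ℤ) := by exact_mod_cast hab
      have hkz : (k : ℤ) = (q : ℤ) - 1 + s := by
        rw [hk']; push_cast [show (1:ℕ) ≤ q by omega]; ring
      omega
    have haz : (a : ℤ) ≤ (q : ℤ) - 1 := by
      have : (a : ℤ) ≤ ((q - 1 : ℕ) : ℤ) := by exact_mod_cast ha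
      omega
    have hbz : (b : ℤ) ≤ (q : ℤ) - 1 := by
      have : (b : ℤ) ≤ ((q - 1 : ℕ) : ℤ) := by exact_mod_cast hb
      omega
    nlinarith [mul_nonneg (show (0:ℤ) ≤ (q:ℤ) - a - 1 by omega)
      (show (0:ℤ) ≤ (q:ℤ) - b - 1 by omega)]
  · intro hr
    have hAcard : ({(0:F)}ᶜ : Finset F).card = q - 1 := by
      rw [Finset.card_compl, Finset.card_singleton, hq]
    have hkk : q - 1 + (q - 1) ≤ k := by
      have : 2 * (q - 1) ≤ r * (q - 1) := Nat.mul_le_mul_right _ hr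
      omega
    obtain ⟨f, hfRM, hf0, hwt⟩ := wt_upper q k hq ({(0:F)}ᶜ) ({(0:F)}ᶜ)
      (by rw [hAcard]; omega) (by omega) (by omega)
    have hmem : 1 ∈ {w | ∃ m ∈ RM F k, m ≠ 0 ∧ wt2 m = w} := by
      refine ⟨f, hfRM, hf0, ?_⟩
      rw [hwt, hAcard]
      have : q - (q - 1) = 1 := by omega
      rw [this, one_mul]
    refine le_antisymm (Nat.sInf_le hmem) (le_csInf ⟨_, hmem⟩ ?_)
    rintro w ⟨m, hmRM, hm0, rfl⟩
    rw [Nat.one_le_iff_ne_zero]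
    intro h
    apply hm0
    have := hammingNorm_eq_zero.mp h
    funext x t
    exact congrFun this (x, t)
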